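/- Let A be a ring of characteristic p with surjective Frobenius (A = A^p), and let R, and hence M, N be R-modules over an A-algebra R. Then the natural surjection Θ : F^e_* M ⊗_A F^e_* N → F^e_*(M ⊗_A N), F^e_* m ⊗ F^e_* n ↦ F^e_*(m ⊗ n), is an isomorphism of R ⊗_A R-modules. -/

import Mathlib

open TensorProduct

/-- `FStar p e M` is the abelian group `M` viewed as a module via restriction of
scalars along the `e`-th iterate of the Frobenius `x ↦ x^{p^e}`, i.e. `F^e_* M`. -/
def FStar (_p _e : ℕ) (M : Type*) : Type _ := M

/-- The identification of `M` with `F^e_* M` as sets. -/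
def FStar.of (p e : ℕ) {M : Type*} (m : M) : FStar p e M := m

instance (p e : ℕ) {M : Type*} [AddCommGroup M] : AddCommGroup (FStar p e M) :=
  inferInstanceAs (AddCommGroup M)

/-- The twisted module structure: `a • (F^e_* m) = F^e_* (a^{p^e} • m)`. -/
noncomputable instance (p e : ℕ) {A M : Type*} [CommRing A] [Fact p.Prime] [CharP A p]
    [AddCommGroup M] [Module A M] : Module A (FStar p e M) :=
  letI : ExpChar A p := ExpChar.prime Fact.out
  Module.compHom M (iterateFrobenius A p e)

/-- The identification of `F^e_* M` with `M` as sets. -/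
def FStar.un (p e : ℕ) {M : Type*} (m : FStar p e M) : M := m

theorem stmt_14 (p e : ℕ) [Fact p.Prime]
    (A R M N : Type*) [CommRing A] [CharP A p] [CommRing R] [Algebra A R]
    [AddCommGroup M] [Module A M] [AddCommGroup N] [Module A N]
    [Module R M] [Module R N] [IsScalarTower A R M] [IsScalarTower A R N]
    (hA : Function.Surjective (fun a : A => a ^ p)) :
    ∃ Θ : FStar p e M ⊗[A] FStar p e N →ₗ[A] FStar p e (M ⊗[A] N),
      (∀ (m : M) (n : N),
        Θ (FStar.of p e m ⊗ₜ[A] FStar.of p e n) = FStar.of p e (m ⊗ₜ[A] n)) ∧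
      Function.Bijective Θ := by
  letI : ExpChar A p := ExpChar.prime Fact.out
  -- surjectivity of the e-th Frobenius iterate
  have hA' : Function.Surjective (fun a : A => a ^ p ^ e) := by
    induction e with
    | zero => intro a; exact ⟨a, by simp⟩
    | succ e ih =>
      intro a
      obtain ⟨b, hb⟩ := ih a
      obtain ⟨c, hc⟩ := hA b
      have hb' : b ^ p ^ e = a := hb
      have hc' : c ^ p = b := hc
      exact ⟨c, by show c ^ p ^ (e + 1) = a; rw [pow_succ', pow_mul, hc', hb']⟩
  -- forward map Θ
  let f : FStar p e M →ₗ[A] FStar p e N →ₗ[A] FStar p e (M ⊗[A] N) :=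
    { toFun := fun m =>
        { toFun := fun n => FStar.of p e (FStar.un p e m ⊗ₜ[A] FStar.un p e n)
          map_add' := fun x y => by
            show (FStar.un p e m ⊗ₜ[A] (FStar.un p e x + FStar.un p e y) : M ⊗[A] N) = _
            rw [TensorProduct.tmul_add]; rfl
          map_smul' := fun a n => by
            show (FStar.un p e m ⊗ₜ[A] ((iterateFrobenius A p e a) • FStar.un p e n) : M ⊗[A] N)
                = (iterateFrobenius A p e a) • (FStar.un p e m ⊗ₜ[A] FStar.un p e n)
            rw [TensorProduct.tmul_smul] }
      map_add' := fun x y => by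
        ext n
        show ((FStar.un p e x + FStar.un p e y) ⊗ₜ[A] FStar.un p e n : M ⊗[A] N) = _
        rw [TensorProduct.add_tmul]; rfl
      map_smul' := fun a m => by
        ext n
        show (((iterateFrobenius A p e a) • FStar.un p e m) ⊗ₜ[A] FStar.un p e n : M ⊗[A] N)
            = (iterateFrobenius A p e a) • (FStar.un p e m ⊗ₜ[A] FStar.un p e n)
        rw [TensorProduct.smul_tmul'] }
  let Θ : FStar p e M ⊗[A] FStar p e N →ₗ[A] FStar p e (M ⊗[A] N) :=
    TensorProduct.lift f
  refine ⟨Θ, fun m n => rfl, ?_⟩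
  -- inverse as an additive map
  let g : M →+ N →+ FStar p e M ⊗[A] FStar p e N :=
    { toFun := fun m =>
        { toFun := fun n => FStar.of p e m ⊗ₜ[A] FStar.of p e n
          map_zero' := TensorProduct.tmul_zero _ _
          map_add' := fun x y => TensorProduct.tmul_add _ _ _ }
      map_zero' := by ext n; exact TensorProduct.zero_tmul _ _
      map_add' := fun x y => by ext n; exact TensorProduct.add_tmul _ _ _ }
  have hg : ∀ (a : A) (m : M) (n : N), g (a • m) n = g m (a • n) := by
    intro a m n
    obtain ⟨b, hb⟩ := hA' a
    have hb' : b ^ p ^ e = a := hb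
    have keyM : ∀ x : M, (b • (FStar.of p e x) : FStar p e M) = FStar.of p e (a • x) := by
      intro x
      show (iterateFrobenius A p e b) • x = a • x
      rw [iterateFrobenius_def, hb']
    have keyN : ∀ x : N, (b • (FStar.of p e x) : FStar p e N) = FStar.of p e (a • x) := by
      intro x
      show (iterateFrobenius A p e b) • x = a • x
      rw [iterateFrobenius_def, hb']
    show FStar.of p e (a • m) ⊗ₜ[A] FStar.of p e n
        = FStar.of p e m ⊗ₜ[A] FStar.of p e (a • n)
    rw [← keyM m, ← keyN n, TensorProduct.smul_tmul]
  let Ψ : M ⊗[A] N →+ FStar p e M ⊗[A] FStar p e N :=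
    TensorProduct.liftAddHom g hg
  have hΨΘ : ∀ x, Ψ (Θ x) = x := by
    intro x
    induction x with
    | zero => exact (congrArg Ψ (map_zero Θ)).trans (map_zero Ψ)
    | tmul m n => rfl
    | add x y hx hy => rw [map_add]; exact (map_add Ψ (Θ x) (Θ y)).trans (congrArg₂ (· + ·) hx hy)
  have hΘΨ : ∀ y : M ⊗[A] N, Θ (Ψ y) = y := by
    intro y
    induction y with
    | zero => simp; rfl
    | tmul m n => rfl
    | add x y hx hy =>
      show Θ (Ψ (x + y)) = x + y
      rw [map_add, map_add, hx, hy]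
      rfl
  exact ⟨fun x y h => by rw [← hΨΘ x, h, hΨΘ y], fun y => ⟨Ψ y, hΘΨ y⟩⟩
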